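/- For the biderivation Γ₅ on ℝ[θ₁,θ₂,η] of the dihedral model (entries as in the matrix: Γ₅(θ₁,θ₁)=4θ₁(1−θ₁), Γ₅(θ₁,θ₂)=−2nθ₁θ₂, Γ₅(θ₁,η)=−2η((n+1)θ₁−1), Γ₅(θ₂,θ₂)=n²((1−θ₁)^{n−1}−θ₂²), Γ₅(θ₂,η)=−n(n+1)θ₂η, Γ₅(η,η)=(1−θ₁)^{n−1}(1+(n²−1)θ₁)−θ₂²−(n+1)²η²), the syzygy polynomial P₁ = θ₁(1−θ₁)ⁿ − θ₁θ₂² − η² satisfies Γ₅(θ₁,P₁) = 4(1−(n+1)θ₁)P₁, Γ₅(θ₂,P₁) = −2n(n+1)θ₂P₁, Γ₅(η,P₁) = −2(n+1)²ηP₁. -/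
import Mathlib

open MvPolynomial

theorem stmt11 (n : ℕ) (hn : 1 ≤ n) :
    let θ₁ : MvPolynomial (Fin 3) ℝ := X 0
    let θ₂ : MvPolynomial (Fin 3) ℝ := X 1
    let η : MvPolynomial (Fin 3) ℝ := X 2
    let N : MvPolynomial (Fin 3) ℝ := (n : MvPolynomial (Fin 3) ℝ)
    let g11 := 4 * θ₁ * (1 - θ₁)
    let g12 := -2 * N * θ₁ * θ₂
    let g13 := -2 * η * ((N + 1) * θ₁ - 1)
    let g22 := N ^ 2 * ((1 - θ₁) ^ (n - 1) - θ₂ ^ 2)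
    let g23 := -N * (N + 1) * θ₂ * η
    let g33 := (1 - θ₁) ^ (n - 1) * (1 + (N ^ 2 - 1) * θ₁) - θ₂ ^ 2 - (N + 1) ^ 2 * η ^ 2
    let P₁ : MvPolynomial (Fin 3) ℝ := θ₁ * (1 - θ₁) ^ n - θ₁ * θ₂ ^ 2 - η ^ 2
    g11 * pderiv 0 P₁ + g12 * pderiv 1 P₁ + g13 * pderiv 2 P₁ = 4 * (1 - (N + 1) * θ₁) * P₁ ∧
    g12 * pderiv 0 P₁ + g22 * pderiv 1 P₁ + g23 * pderiv 2 P₁ = -2 * N * (N + 1) * θ₂ * P₁ ∧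
    g13 * pderiv 0 P₁ + g23 * pderiv 1 P₁ + g33 * pderiv 2 P₁ = -2 * (N + 1) ^ 2 * η * P₁ := by
  obtain ⟨m, rfl⟩ : ∃ m, n = m + 1 := ⟨n - 1, (Nat.succ_pred_eq_of_pos hn).symm⟩
  intro θ₁ θ₂ η N g11 g12 g13 g22 g23 g33 P₁
  have h0 : pderiv 0 P₁ =
      (1 - θ₁) ^ (m + 1) - ((m : MvPolynomial (Fin 3) ℝ) + 1) * θ₁ * (1 - θ₁) ^ m - θ₂ ^ 2 := by
    simp [P₁, θ₁, θ₂, η, pderiv_X]; ring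
  have h1 : pderiv 1 P₁ = -2 * θ₁ * θ₂ := by simp [P₁, θ₁, θ₂, η, pderiv_X]; try ring
  have h2 : pderiv 2 P₁ = -2 * η := by simp [P₁, θ₁, θ₂, η, pderiv_X]; try ring
  have hN : N = (m : MvPolynomial (Fin 3) ℝ) + 1 := by simp [N]
  simp only [h0, h1, h2, hN, g11, g12, g13, g22, g23, g33, P₁, Nat.add_sub_cancel]
  refine ⟨?_, ?_, ?_⟩ <;> ring
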